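/- Let I be a bounded interval with Lebesgue measure, let q : I → ℝ be measurable and bounded, and let S = {x ↦ exp(t·q(x)) : t ∈ ℝ}. Then for 1 < r < ∞, the closure of span(S) in L^r(I) equals the subspace of L^r(I) consisting of (classes of) functions having a σ(q)-measurable representative. -/

import Mathlib

open MeasureTheory Set Filter
open scoped ENNReal NNReal

section Aux

variable {q : ℝ → ℝ}

/-- The set of exponentials of `q`. -/
private def expSet (q : ℝ → ℝ) : Set (ℝ → ℝ) :=
  {g | ∃ t : ℝ, g = fun x => Real.exp (t * q x)}

private lemma measurable_of_mem_span {g : ℝ → ℝ}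
    (hg : g ∈ Submodule.span ℝ (expSet q)) :
    @Measurable ℝ ℝ (MeasurableSpace.comap q Real.measurableSpace) _ g := by
  induction hg using Submodule.span_induction with
  | mem g hgS =>
    obtain ⟨t, rfl⟩ := hgS
    exact (Real.measurable_exp.comp (measurable_const.mul measurable_id)).comp
      (comap_measurable q)
  | zero => exact @measurable_const ℝ ℝ _ _ 0
  | add x y hx hy px py => exact px.add py
  | smul c x hx px => exact px.const_smul c

/-- Stone–Weierstrass step: uniform approximation of `ψ ∘ q` by span of exponentials. -/
private lemma exists_span_approx_unif {M : ℝ} (hbd : ∀ x, |q x| ≤ M)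
    (ψ : BoundedContinuousFunction ℝ ℝ) {δ : ℝ} (hδ : 0 < δ) :
    ∃ g ∈ Submodule.span ℝ (expSet q), ∀ x : ℝ, |ψ (q x) - g x| ≤ δ := by
  have hqK : ∀ x, q x ∈ Icc (-M) M := fun x => by
    rcases abs_le.mp (hbd x) with ⟨h1, h2⟩; exact ⟨h1, h2⟩
  set K : Set ℝ := Icc (-M) M with hK
  -- the exponentials restricted to K
  let E : ℝ → C(K, ℝ) := fun t =>
    ⟨fun z => Real.exp (t * (z : ℝ)), by continuity⟩
  let Sk : Set C(K, ℝ) := Set.range E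
  let SkM : Submonoid C(K, ℝ) :=
    { carrier := Sk
      one_mem' := ⟨0, by ext z; simp [E]⟩
      mul_mem' := by
        rintro - - ⟨t₁, rfl⟩ ⟨t₂, rfl⟩
        exact ⟨t₁ + t₂, by ext z; simp [E, add_mul, Real.exp_add]⟩ }
  have hclosure : (Submonoid.closure Sk : Set C(K, ℝ)) ⊆
      (Submodule.span ℝ Sk : Set C(K, ℝ)) := by
    intro x hx
    have : x ∈ SkM := Submonoid.closure_le.mpr le_rfl hx
    exact Submodule.subset_span this
  have hspan : Subalgebra.toSubmodule (Algebra.adjoin ℝ Sk) = Submodule.span ℝ Sk :=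
    Algebra.adjoin_eq_span_of_subset (R := ℝ) hclosure
  have sep : (Algebra.adjoin ℝ Sk).SeparatesPoints := by
    intro z w hzw
    refine ⟨_, ⟨E 1, Algebra.subset_adjoin ⟨1, rfl⟩, rfl⟩, ?_⟩
    simp only [E, ContinuousMap.coe_mk, one_mul]
    intro h
    exact hzw (Subtype.ext (Real.exp_injective h))
  have hA := ContinuousMap.subalgebra_topologicalClosure_eq_top_of_separatesPoints _ sep
  let ψK : C(K, ℝ) := (ψ : C(ℝ, ℝ)).restrict K
  have hmem : ψK ∈ closure ((Algebra.adjoin ℝ Sk : Subalgebra ℝ C(K, ℝ)) : Set C(K, ℝ)) := by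
    have h1 : ψK ∈ (Algebra.adjoin ℝ Sk).topologicalClosure := by
      rw [hA]; trivial
    exact h1
  obtain ⟨e, heA, he⟩ := Metric.mem_closure_iff.mp hmem δ hδ
  have heSpan : e ∈ Submodule.span ℝ Sk := by
    rw [← hspan] at *; exact heA
  have key : ∀ (e : C(K, ℝ)), e ∈ Submodule.span ℝ Sk →
      ∃ g, g ∈ Submodule.span ℝ (expSet q) ∧ ∀ x : ℝ, g x = e ⟨q x, hqK x⟩ := by
    intro e he
    induction he using Submodule.span_induction with
    | mem e heSk =>
      obtain ⟨t, rfl⟩ := heSk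
      exact ⟨fun x => Real.exp (t * q x), Submodule.subset_span ⟨t, rfl⟩, fun x => rfl⟩
    | zero => exact ⟨0, Submodule.zero_mem _, fun x => rfl⟩
    | add x y hx hy px py =>
      obtain ⟨g₁, hg₁, e₁⟩ := px
      obtain ⟨g₂, hg₂, e₂⟩ := py
      exact ⟨g₁ + g₂, Submodule.add_mem _ hg₁ hg₂, fun x => by
        simp [e₁ x, e₂ x]⟩
    | smul c x hx px =>
      obtain ⟨g, hg, e₁⟩ := px
      exact ⟨c • g, Submodule.smul_mem _ _ hg, fun x => by simp [e₁ x]⟩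
  obtain ⟨g, hg, hge⟩ := key e heSpan
  refine ⟨g, hg, fun x => ?_⟩
  rw [hge x]
  have h1 : dist (ψK ⟨q x, hqK x⟩) (e ⟨q x, hqK x⟩) ≤ dist ψK e :=
    ContinuousMap.dist_apply_le_dist _
  have h2 : ψK ⟨q x, hqK x⟩ = ψ (q x) := rfl
  rw [h2, Real.dist_eq] at h1
  exact h1.trans he.le

end Aux

section Density

variable {q : ℝ → ℝ} {M : ℝ}

private lemma comp_approx (hq : Measurable q) (hbd : ∀ x, |q x| ≤ M)
    {μ : Measure ℝ} [IsFiniteMeasure μ] {p : ℝ≥0∞} (hp1 : 1 ≤ p) (hp_top : p ≠ ∞)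
    {φ : ℝ → ℝ} (hφ : Measurable φ) (hφp : MemLp φ p (μ.map q))
    {ε : ℝ≥0∞} (hε : ε ≠ 0) :
    ∃ g ∈ Submodule.span ℝ (expSet q),
      eLpNorm ((fun x => φ (q x)) - g) p μ ≤ ε := by
  have hε2 : ε / 2 ≠ 0 := by
    simp [ENNReal.div_eq_zero_iff, hε]
  -- bounded continuous approximation in L^p of the pushforward measure
  obtain ⟨ψ, hψ, -⟩ := hφp.exists_boundedContinuous_eLpNorm_sub_le hp_top hε2
  have hmap : eLpNorm ((fun x => φ (q x)) - (fun x => ψ (q x))) p μ ≤ ε / 2 := by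
    have h := eLpNorm_map_measure (μ := μ) (f := q) (p := p) (g := φ - ⇑ψ)
      ((hφ.sub ψ.continuous.measurable).aestronglyMeasurable) hq.aemeasurable
    calc eLpNorm ((fun x => φ (q x)) - (fun x => ψ (q x))) p μ
        = eLpNorm ((φ - ⇑ψ) ∘ q) p μ := rfl
      _ = eLpNorm (φ - ⇑ψ) p (μ.map q) := h.symm
      _ ≤ ε / 2 := hψ
  -- choose a uniform approximation scale
  set B : ℝ≥0∞ := (μ Set.univ) ^ p.toReal⁻¹ with hB
  have hBne : B ≠ ∞ := by
    apply (ENNReal.rpow_lt_top_of_nonneg (by positivity) (measure_ne_top μ _)).ne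
  set η : ℝ≥0∞ := min (ε / 2) 1 with hη
  have hηne : η ≠ 0 := by
    simp only [hη, ne_eq, min_eq_iff, not_or]
    constructor
    · rintro ⟨h, -⟩; exact hε2 h
    · rintro ⟨h, -⟩; exact one_ne_zero h
  have hηtop : η ≠ ∞ := (min_le_right _ _).trans_lt (by norm_num) |>.ne
  set δ : ℝ := (η / (B + 1)).toReal with hδdef
  have hdivne : η / (B + 1) ≠ 0 := by
    rw [ENNReal.div_ne_zero]
    exact ⟨hηne, by simp [hBne]⟩
  have hdivtop : η / (B + 1) ≠ ∞ := by
    exact (ENNReal.div_lt_top hηtop (by simp)).ne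
  have hδpos : 0 < δ := ENNReal.toReal_pos hdivne hdivtop
  obtain ⟨g, hgmem, hgψ⟩ := exists_span_approx_unif hbd ψ hδpos
  have hgm : Measurable g := (measurable_of_mem_span hgmem).mono hq.comap_le le_rfl
  have hbound : eLpNorm ((fun x => ψ (q x)) - g) p μ ≤ B * ENNReal.ofReal δ := by
    refine (eLpNorm_le_of_ae_bound (C := δ) (ae_of_all _ fun x => ?_)).trans le_rfl
    simpa [Real.norm_eq_abs] using hgψ x
  have hsmall : B * ENNReal.ofReal δ ≤ ε / 2 := by
    have h1 : ENNReal.ofReal δ = η / (B + 1) := by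
      rw [hδdef, ENNReal.ofReal_toReal hdivtop]
    rw [h1, mul_comm]
    calc η / (B + 1) * B ≤ η / (B + 1) * (B + 1) := by
          exact mul_le_mul_right (le_self_add) _
      _ = η := ENNReal.div_mul_cancel (by simp) (by simp [hBne])
      _ ≤ ε / 2 := min_le_left _ _
  refine ⟨g, hgmem, ?_⟩
  have hsplit : (fun x => φ (q x)) - g =
      ((fun x => φ (q x)) - (fun x => ψ (q x))) + ((fun x => ψ (q x)) - g) := by
    ext x; simp
  rw [hsplit]
  have hm1 : AEStronglyMeasurable ((fun x => φ (q x)) - (fun x => ψ (q x))) μ :=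
    ((hφ.comp hq).sub (ψ.continuous.measurable.comp hq)).aestronglyMeasurable
  have hm2 : AEStronglyMeasurable ((fun x => ψ (q x)) - g) μ :=
    ((ψ.continuous.measurable.comp hq).sub hgm).aestronglyMeasurable
  calc eLpNorm _ p μ ≤ _ + _ := eLpNorm_add_le hm1 hm2 hp1
    _ ≤ ε / 2 + ε / 2 := add_le_add hmap (hbound.trans hsmall)
    _ = ε := ENNReal.add_halves ε

end Density

private lemma simpleFunc_factor {X : Type*} [m : MeasurableSpace X] {q : X → ℝ}
    (hm : ∀ t : Set X, MeasurableSet t → ∃ B : Set ℝ, MeasurableSet B ∧ q ⁻¹' B = t)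
    (s : SimpleFunc X ℝ) :
    ∃ φ : ℝ → ℝ, Measurable φ ∧ (∃ C : ℝ, ∀ y, |φ y| ≤ C) ∧ ∀ x, φ (q x) = ⇑s x := by
  classical
  choose B hBmeas hBeq using fun c => hm (⇑s ⁻¹' {c}) (s.measurableSet_fiber c)
  refine ⟨fun y => ∑ c ∈ s.range, c * (B c).indicator (fun _ => (1 : ℝ)) y, ?_,
    ⟨∑ c ∈ s.range, |c|, ?_⟩, ?_⟩
  · apply Finset.measurable_sum
    intro c _
    exact measurable_const.mul (measurable_const.indicator (hBmeas c))
  · intro y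
    refine (Finset.abs_sum_le_sum_abs _ _).trans (Finset.sum_le_sum fun c _ => ?_)
    rw [abs_mul]
    have hind : |(B c).indicator (fun _ => (1 : ℝ)) y| ≤ 1 := by
      by_cases hy : y ∈ B c <;> simp [Set.indicator_of_mem, Set.indicator_of_notMem, hy]
    calc |c| * |(B c).indicator (fun _ => (1 : ℝ)) y| ≤ |c| * 1 :=
          mul_le_mul_of_nonneg_left hind (abs_nonneg c)
      _ = |c| := mul_one _
  · intro x
    show (∑ c ∈ s.range, c * (B c).indicator (fun _ => (1 : ℝ)) (q x)) = s x
    rw [Finset.sum_eq_single (s x)]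
    · have hx : q x ∈ B (s x) := by
        have : x ∈ q ⁻¹' B (s x) := by rw [hBeq]; exact rfl
        exact this
      simp [Set.indicator_of_mem hx]
    · intro c hc hne
      have hx : q x ∉ B c := by
        intro hmem
        have : x ∈ ⇑s ⁻¹' {c} := by rw [← hBeq]; exact hmem
        have hxc : s x = c := by simpa using this
        exact hne hxc.symm
      simp [Set.indicator_of_notMem hx]
    · intro h; exact absurd (s.mem_range_self x) h


section Core

variable {q : ℝ → ℝ} {M : ℝ}

private lemma core_density (hq : Measurable q) (hbd : ∀ x, |q x| ≤ M)
    {μ : Measure ℝ} [IsFiniteMeasure μ] {p : ℝ≥0∞} (hp1 : 1 ≤ p) (hp_top : p ≠ ∞)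
    {f₀ : ℝ → ℝ}
    (hf₀ : @Measurable ℝ ℝ (MeasurableSpace.comap q Real.measurableSpace) _ f₀)
    (hf₀p : MemLp f₀ p μ) {ε : ℝ≥0∞} (hε : ε ≠ 0) :
    ∃ g ∈ Submodule.span ℝ (expSet q), eLpNorm (f₀ - g) p μ ≤ ε := by
  classical
  have hle : MeasurableSpace.comap q Real.measurableSpace ≤ Real.measurableSpace := hq.comap_le
  have hε2 : ε / 2 ≠ 0 := by simp [ENNReal.div_eq_zero_iff, hε]
  have hsm : StronglyMeasurable[MeasurableSpace.comap q Real.measurableSpace] f₀ :=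
    @Measurable.stronglyMeasurable ℝ ℝ f₀ (MeasurableSpace.comap q Real.measurableSpace) _ _ _ _ _ hf₀
  have hf₀trim : MemLp f₀ p (μ.trim hle) :=
    ⟨hsm.aestronglyMeasurable, by rw [eLpNorm_trim hle hsm]; exact hf₀p.2⟩
  obtain ⟨s, hs, -⟩ := @MeasureTheory.MemLp.exists_simpleFunc_eLpNorm_sub_lt ℝ
    (MeasurableSpace.comap q Real.measurableSpace) p ℝ _ f₀ (μ.trim hle) hf₀trim hp_top _ hε2
  have hs' : eLpNorm (f₀ - ⇑s) p μ < ε / 2 := by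
    rwa [eLpNorm_trim hle (hsm.sub s.stronglyMeasurable)] at hs
  -- factor the simple function through q
  obtain ⟨φ, hφmeas, ⟨C, hφbd⟩, hφq⟩ :=
    @simpleFunc_factor ℝ (MeasurableSpace.comap q Real.measurableSpace) q
      (fun t ht => MeasurableSpace.measurableSet_comap.mp ht) s
  have hφp : MemLp φ p (μ.map q) := by
    haveI : IsFiniteMeasure (μ.map q) := Measure.isFiniteMeasure_map μ q
    exact MemLp.of_bound hφmeas.aestronglyMeasurable C
      (ae_of_all _ fun y => by simpa [Real.norm_eq_abs] using hφbd y)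
  obtain ⟨g, hgmem, hg⟩ := comp_approx hq hbd hp1 hp_top hφmeas hφp hε2
  have hgs : eLpNorm (⇑s - g) p μ ≤ ε / 2 := by
    have : (fun x => φ (q x)) = ⇑s := funext hφq
    rwa [this] at hg
  refine ⟨g, hgmem, ?_⟩
  have hgm : Measurable g := (measurable_of_mem_span hgmem).mono hq.comap_le le_rfl
  have hsplit : f₀ - g = (f₀ - ⇑s) + (⇑s - g) := by ext x; simp
  rw [hsplit]
  have hm1 : AEStronglyMeasurable (f₀ - ⇑s) μ :=
    ((hsm.sub s.stronglyMeasurable).mono hle).aestronglyMeasurable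
  have hm2 : AEStronglyMeasurable (⇑s - g) μ :=
    ((s.stronglyMeasurable.mono hle).measurable.sub hgm).aestronglyMeasurable
  calc eLpNorm _ p μ ≤ _ + _ := eLpNorm_add_le hm1 hm2 hp1
    _ ≤ ε / 2 + ε / 2 := add_le_add hs'.le hgs
    _ = ε := ENNReal.add_halves ε

end Core

private lemma exists_sigma_limit {X : Type*} {m m0 : MeasurableSpace X} (hle : m ≤ m0)
    (μ0 : @Measure X m0) {g : ℕ → X → ℝ}
    (hg : ∀ n, @Measurable X ℝ m Real.measurableSpace (g n)) {f : X → ℝ}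
    (hae : ∀ᵐ x ∂μ0, Tendsto (fun n => g n x) atTop (nhds (f x))) :
    ∃ f₀ : X → ℝ, @Measurable X ℝ m Real.measurableSpace f₀ ∧ f =ᵐ[μ0] f₀ := by
  have hE : @MeasurableSet X m {x | ∃ c : ℝ, Tendsto (fun n => g n x) atTop (nhds c)} :=
    @MeasureTheory.measurableSet_exists_tendsto ℕ ℝ X m _ _ _ _ _ _ atTop _ g hg
  have haeE : ∀ᵐ x ∂(μ0.trim hle),
      ∃ c : ℝ, Tendsto (fun n => g n x) atTop (nhds c) := by
    rw [ae_iff]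
    have hcompl : {x | ¬ ∃ c : ℝ, Tendsto (fun n => g n x) atTop (nhds c)} =
        {x | ∃ c : ℝ, Tendsto (fun n => g n x) atTop (nhds c)}ᶜ := rfl
    rw [hcompl, trim_measurableSet_eq hle (MeasurableSet.compl hE)]
    have hsub : {x | ∃ c : ℝ, Tendsto (fun n => g n x) atTop (nhds c)}ᶜ ⊆
        {x | ¬ Tendsto (fun n => g n x) atTop (nhds (f x))} := by
      intro x hx hcon
      exact hx ⟨f x, hcon⟩
    exact measure_mono_null hsub (ae_iff.mp hae)
  obtain ⟨f₀, hf₀m, hf₀tend⟩ :=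
    @measurable_limit_of_tendsto_metrizable_ae X ℝ m _ _ _ _ ℕ _ (μ0.trim hle) g atTop _
      (fun n => @Measurable.aemeasurable X ℝ m _ (g n) (μ0.trim hle) (hg n)) haeE
  have hf₀tend' : ∀ᵐ x ∂μ0, Tendsto (fun n => g n x) atTop (nhds (f₀ x)) :=
    ae_of_ae_trim hle hf₀tend
  refine ⟨f₀, hf₀m, ?_⟩
  filter_upwards [hae, hf₀tend'] with x h1 h2
  exact tendsto_nhds_unique h1 h2

/-- The closure in `L^r(I)` of the span of the exponentials `exp(t·q(x))`,
`t ∈ ℝ`, consists exactly of those `L^r` functions having a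
`σ(q)`-measurable representative. -/
theorem closure_span_exponentials_eq_sigma_measurable
    (a b r : ℝ) (hab : a < b) (hr : 1 < r)
    (q : ℝ → ℝ) (hq : Measurable q) (M : ℝ) (hbd : ∀ x, |q x| ≤ M) :
    let μ := volume.restrict (Ioo a b)
    let S : Set (ℝ → ℝ) := {g | ∃ t : ℝ, g = fun x => Real.exp (t * q x)}
    ∀ f : ℝ → ℝ, MemLp f (ENNReal.ofReal r) μ →
      ((∃ g : ℕ → ℝ → ℝ, (∀ n, g n ∈ Submodule.span ℝ S) ∧
          Tendsto (fun n => eLpNorm (f - g n) (ENNReal.ofReal r) μ) atTop (nhds 0)) ↔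
        ∃ f₀ : ℝ → ℝ,
          @Measurable ℝ ℝ (MeasurableSpace.comap q Real.measurableSpace) _ f₀ ∧
          f =ᵐ[μ] f₀) := by
  intro μ S f hf
  have hSeq : S = expSet q := rfl
  set p : ℝ≥0∞ := ENNReal.ofReal r with hp
  have hp1 : 1 ≤ p := by
    rw [hp, ← ENNReal.ofReal_one]
    exact ENNReal.ofReal_le_ofReal hr.le
  have hp0 : p ≠ 0 := by
    intro h
    rw [h] at hp1
    simp at hp1
  have hp_top : p ≠ ∞ := ENNReal.ofReal_ne_top
  haveI : IsFiniteMeasure μ := by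
    constructor
    rw [Measure.restrict_apply_univ, Real.volume_Ioo]
    exact ENNReal.ofReal_lt_top
  have hle : MeasurableSpace.comap q Real.measurableSpace ≤ Real.measurableSpace :=
    hq.comap_le
  constructor
  · rintro ⟨g, hgmem, hgtend⟩
    have hgm : ∀ n, @Measurable ℝ ℝ (MeasurableSpace.comap q Real.measurableSpace) _ (g n) :=
      fun n => measurable_of_mem_span (hSeq ▸ hgmem n)
    have hgB : ∀ n, Measurable (g n) := fun n => (hgm n).mono hle le_rfl
    have hTIM : TendstoInMeasure μ g atTop f := by
      apply tendstoInMeasure_of_tendsto_eLpNorm (p := p) hp0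
        (fun n => (hgB n).aestronglyMeasurable) hf.1
      have h : (fun n => eLpNorm (g n - f) p μ) = fun n => eLpNorm (f - g n) p μ := by
        funext n; exact eLpNorm_sub_comm _ _ _ _
      rw [h]
      exact hgtend
    obtain ⟨ns, -, hae⟩ := hTIM.exists_seq_tendsto_ae
    obtain ⟨f₀, hf₀m, hff₀⟩ :=
      @exists_sigma_limit ℝ (MeasurableSpace.comap q Real.measurableSpace) _ hle μ
        (fun n => g (ns n)) (fun n => hgm (ns n)) f hae
    exact ⟨f₀, hf₀m, hff₀⟩
  · rintro ⟨f₀, hf₀m, hff₀⟩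
    have hf₀p : MemLp f₀ p μ := hf.ae_eq hff₀
    have main : ∀ n : ℕ, ∃ g, g ∈ Submodule.span ℝ (expSet q) ∧
        eLpNorm (f₀ - g) p μ ≤ ((n : ℝ≥0∞) + 1)⁻¹ := by
      intro n
      have hne : ((n : ℝ≥0∞) + 1)⁻¹ ≠ 0 := by
        rw [ne_eq, ENNReal.inv_eq_zero]
        exact ENNReal.add_ne_top.mpr ⟨ENNReal.natCast_ne_top n, ENNReal.one_ne_top⟩
      obtain ⟨g, hg1, hg2⟩ := core_density hq hbd hp1 hp_top hf₀m hf₀p hne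
      exact ⟨g, hg1, hg2⟩
    choose g hgmem hgle using main
    refine ⟨g, fun n => hSeq ▸ hgmem n, ?_⟩
    have heq : ∀ n, eLpNorm (f - g n) p μ = eLpNorm (f₀ - g n) p μ := fun n =>
      eLpNorm_congr_ae (hff₀.sub (EventuallyEq.refl _ _))
    have hupper : Tendsto (fun n : ℕ => ((n : ℝ≥0∞) + 1)⁻¹) atTop (nhds 0) := by
      have h1 := ENNReal.tendsto_inv_nat_nhds_zero.comp (tendsto_add_atTop_nat 1)
      have : ((fun n : ℕ => ((n : ℝ≥0∞))⁻¹) ∘ fun n => n + 1) =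
          fun n : ℕ => ((n : ℝ≥0∞) + 1)⁻¹ := by
        funext n; simp [Function.comp]
      rwa [this] at h1
    have h0 : Tendsto (fun _ : ℕ => (0 : ℝ≥0∞)) atTop (nhds 0) := tendsto_const_nhds
    refine tendsto_of_tendsto_of_tendsto_of_le_of_le h0 hupper
      (fun n => zero_le) (fun n => ?_)
    rw [heq n]
    exact hgle n
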